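/- Consider Problem P1-B for one sensor with fixed data size ℓ > 0: minimize (q_r + q_s + q_c·C(R,ε))·ℓ + (t/h)·f(ℓ/(t·R)) over R ∈ [1, R_max] and t > 0 subject to the time constraint ℓ/s + ℓ·C(R,ε)/f_cpu + t ≤ T. If (R*, t*) is a minimizer with t* > 0, then the time constraint holds with equality: ℓ/s + ℓ·C(R*,ε)/f_cpu + t* = T. -/

import Mathlib

open Real Set

/-- Slope inequality for the strictly convex exponential. -/
lemma slope_exp_lt {b a : ℝ} (hb : 0 < b) (hba : b < a) :
    a * (Real.exp b - 1) < b * (Real.exp a - 1) := by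
  have ha : 0 < a := hb.trans hba
  have hlam : 0 < b / a := div_pos hb ha
  have hmu : 0 < 1 - b / a := by
    have : b / a < 1 := (div_lt_one ha).2 hba
    linarith
  have hconv := strictConvexOn_exp.2 (Set.mem_univ (0 : ℝ)) (Set.mem_univ a)
    (by positivity) hmu hlam (by ring)
  simp only [smul_eq_mul, mul_zero, zero_add, Real.exp_zero, mul_one] at hconv
  have hba' : b / a * a = b := div_mul_cancel₀ b ha.ne'
  rw [hba'] at hconv
  have := mul_lt_mul_of_pos_left hconv ha
  have hA : a * (b / a * Real.exp a) = b * Real.exp a := by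
    field_simp
  nlinarith [this]

/-- `t ↦ t * (exp (a/t) - 1)` is strictly decreasing on `t > 0` for `a > 0`. -/
lemma exp_energy_strict_anti {a t t' : ℝ} (ha : 0 < a) (ht : 0 < t) (htt : t < t') :
    t' * (Real.exp (a / t') - 1) < t * (Real.exp (a / t) - 1) := by
  have ht' : 0 < t' := ht.trans htt
  have hb : 0 < a / t' := div_pos ha ht'
  have hba : a / t' < a / t := div_lt_div_of_pos_left ha ht htt
  have key := slope_exp_lt hb hba
  -- key : (a/t) * (exp (a/t') - 1) < (a/t') * (exp (a/t) - 1)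
  have := mul_lt_mul_of_pos_left key (mul_pos (mul_pos ht ht') (inv_pos.2 ha))
  have h1 : t * t' * a⁻¹ * (a / t * (Real.exp (a / t') - 1))
      = t' * (Real.exp (a / t') - 1) := by field_simp
  have h2 : t * t' * a⁻¹ * (a / t' * (Real.exp (a / t) - 1))
      = t * (Real.exp (a / t) - 1) := by field_simp
  rwa [h1, h2] at this

/-- At a minimizer of Problem P1-B (single sensor, fixed data size `ℓ`) with
positive transmission duration, the crowd-sensing time constraint is tight. -/
theorem P1B_time_constraint_tight
    (N0 B qr qs qc h s fcpu T ℓ ε Rmax : ℝ)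
    (hN0 : 0 < N0) (hB : 0 < B) (hqr : 0 < qr) (hqs : 0 < qs) (hqc : 0 < qc)
    (hh : 0 < h) (hs : 0 < s) (hfcpu : 0 < fcpu) (hT : 0 < T) (hℓ : 0 < ℓ)
    (hε : 0 < ε) (hRmax : 1 ≤ Rmax)
    (Rstar tstar : ℝ)
    (hR1 : 1 ≤ Rstar) (hR2 : Rstar ≤ Rmax) (ht : 0 < tstar)
    (htime : ℓ / s + ℓ * (Real.exp (ε * Rstar) - Real.exp ε) / fcpu + tstar ≤ T)
    (hopt : ∀ R t : ℝ, 1 ≤ R → R ≤ Rmax → 0 < t →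
      ℓ / s + ℓ * (Real.exp (ε * R) - Real.exp ε) / fcpu + t ≤ T →
      (qr + qs + qc * (Real.exp (ε * Rstar) - Real.exp ε)) * ℓ
          + (tstar / h) * (N0 * ((2 : ℝ) ^ (ℓ / (tstar * Rstar) / B) - 1))
        ≤ (qr + qs + qc * (Real.exp (ε * R) - Real.exp ε)) * ℓ
          + (t / h) * (N0 * ((2 : ℝ) ^ (ℓ / (t * R) / B) - 1))) :
    ℓ / s + ℓ * (Real.exp (ε * Rstar) - Real.exp ε) / fcpu + tstar = T := by
  by_contra hne
  have hlt : ℓ / s + ℓ * (Real.exp (ε * Rstar) - Real.exp ε) / fcpu + tstar < T :=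
    lt_of_le_of_ne htime hne
  set K := ℓ / s + ℓ * (Real.exp (ε * Rstar) - Real.exp ε) / fcpu with hK
  set t' := T - K with ht'def
  have htt : tstar < t' := by simp only [ht'def]; linarith
  have ht'pos : 0 < t' := ht.trans htt
  have hfeas : ℓ / s + ℓ * (Real.exp (ε * Rstar) - Real.exp ε) / fcpu + t' ≤ T := by
    simp only [ht'def]
    linarith
  have hopt' := hopt Rstar t' hR1 hR2 ht'pos hfeas
  -- rewrite the rpow terms as exponentials
  have hRpos : 0 < Rstar := lt_of_lt_of_le one_pos hR1
  set a := Real.log 2 * (ℓ / Rstar / B) with hadef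
  have hapos : 0 < a := by
    have : (0:ℝ) < Real.log 2 := Real.log_pos (by norm_num)
    positivity
  have hrw : ∀ t : ℝ, 0 < t →
      (2 : ℝ) ^ (ℓ / (t * Rstar) / B) = Real.exp (a / t) := by
    intro t htp
    rw [Real.rpow_def_of_pos (by norm_num : (0:ℝ) < 2)]
    congr 1
    field_simp [hadef]
    rw [hadef]; field_simp
  rw [hrw tstar ht, hrw t' ht'pos] at hopt'
  have hstrict := exp_energy_strict_anti hapos ht htt
  have hmul := mul_lt_mul_of_pos_left hstrict (div_pos hN0 hh)
  have hE1 : (tstar / h) * (N0 * (Real.exp (a / tstar) - 1))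
      = N0 / h * (tstar * (Real.exp (a / tstar) - 1)) := by ring
  have hE2 : (t' / h) * (N0 * (Real.exp (a / t') - 1))
      = N0 / h * (t' * (Real.exp (a / t') - 1)) := by ring
  rw [hE1, hE2] at hopt'
  linarith
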